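/- Suppose f : [0,1] → ℝ≥0 is a concave probability density. For the test rejecting when |x−1/2| ≤ c, its power ∫_{|x−1/2|≤c} f(x) dx is at least its level 2c (the Lebesgue measure of the rejection region). -/

import Mathlib

open MeasureTheory

theorem concave_density_center_power_ge_level (f : ℝ → ℝ)
    (hf_concave : ConcaveOn ℝ (Set.Icc (0:ℝ) 1) f)
    (hf_nonneg : ∀ t ∈ Set.Icc (0:ℝ) 1, 0 ≤ f t)
    (hf_int : IntegrableOn f (Set.Icc (0:ℝ) 1))
    (hf_prob : ∫ t in Set.Icc (0:ℝ) 1, f t = 1)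
    (c : ℝ) (hc : c ∈ Set.Icc (0:ℝ) (1/2)) :
    2 * c ≤ ∫ x in {x ∈ Set.Icc (0:ℝ) 1 | |x - 1/2| ≤ c}, f x := by
  obtain ⟨hc0, hc1⟩ := hc
  -- rewrite the set as an interval
  have hset : {x ∈ Set.Icc (0:ℝ) 1 | |x - 1/2| ≤ c} = Set.Icc (1/2 - c) (1/2 + c) := by
    ext x
    simp only [Set.mem_setOf_eq, Set.mem_Icc, abs_le]
    constructor
    · rintro ⟨⟨h1, h2⟩, h3, h4⟩; constructor <;> linarith
    · rintro ⟨h1, h2⟩; refine ⟨⟨by linarith, by linarith⟩, by linarith, by linarith⟩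
  rw [hset]
  have hsub : Set.Icc (1/2 - c) (1/2 + c) ⊆ Set.Icc (0:ℝ) 1 := by
    intro x hx
    simp only [Set.mem_Icc] at hx ⊢
    constructor <;> linarith [hx.1, hx.2]
  have hI01 : IntervalIntegrable f volume 0 1 := by
    rw [intervalIntegrable_iff_integrableOn_Icc_of_le (by norm_num)]
    exact hf_int
  have hprob' : ∫ x in (0:ℝ)..1, f x = 1 := by
    rw [intervalIntegral.integral_of_le (by norm_num), ← integral_Icc_eq_integral_Ioc]
    exact hf_prob
  -- f (1/2) ≥ 1
  have hrefl : IntervalIntegrable (fun x => f (1 - x)) volume 0 1 := by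
    simpa using (hI01.comp_sub_left 1).symm
  have hreflint : ∫ x in (0:ℝ)..1, f (1 - x) = 1 := by
    rw [intervalIntegral.integral_comp_sub_left f 1]
    simpa using hprob'
  have hhalfmem : (1/2 : ℝ) ∈ Set.Icc (0:ℝ) 1 := by norm_num
  have hhalf : (1:ℝ) ≤ f (1/2) := by
    have key : ∀ x ∈ Set.Icc (0:ℝ) 1, (1/2) * f x + (1/2) * f (1 - x) ≤ f (1/2) := by
      intro x hx
      have hx' : (1 - x) ∈ Set.Icc (0:ℝ) 1 := by
        simp only [Set.mem_Icc] at hx ⊢; constructor <;> linarith [hx.1, hx.2]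
      have h := hf_concave.2 hx hx' (by norm_num : (0:ℝ) ≤ 1/2) (by norm_num : (0:ℝ) ≤ 1/2)
        (by norm_num)
      simp only [smul_eq_mul] at h
      have : (1/2 : ℝ) * x + 1/2 * (1 - x) = 1/2 := by ring
      rw [this] at h
      exact h
    calc (1:ℝ) = ∫ x in (0:ℝ)..1, ((1/2) * f x + (1/2) * f (1 - x)) := by
          rw [intervalIntegral.integral_add (hI01.const_mul _) (hrefl.const_mul _),
            intervalIntegral.integral_const_mul, intervalIntegral.integral_const_mul,
            hprob', hreflint]
          ring
      _ ≤ ∫ _x in (0:ℝ)..1, f (1/2) :=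
          intervalIntegral.integral_mono_on (by norm_num)
            ((hI01.const_mul _).add (hrefl.const_mul _)) intervalIntegrable_const key
      _ = f (1/2) := by simp
  rcases eq_or_lt_of_le hc0 with hc0' | hc0'
  · -- c = 0
    subst hc0'
    rw [show (2:ℝ)*0 = 0 by ring]
    apply setIntegral_nonneg measurableSet_Icc
    intro x hx
    exact hf_nonneg x (hsub hx)
  -- c > 0
  have h2c : (2*c : ℝ) ≠ 0 := by positivity
  have hle : (1/2 - c : ℝ) ≤ 1/2 + c := by linarith
  have hIc : IntervalIntegrable f volume (1/2 - c) (1/2 + c) := by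
    rw [intervalIntegrable_iff_integrableOn_Icc_of_le hle]
    exact hf_int.mono_set hsub
  -- substitution
  have hsubst : ∫ u in (0:ℝ)..1, f (2*c*u + (1/2 - c))
      = (2*c)⁻¹ * ∫ x in (1/2 - c)..(1/2 + c), f x := by
    rw [intervalIntegral.integral_comp_mul_add f h2c (1/2 - c),
      show (2*c*0 + (1/2 - c):ℝ) = 1/2 - c by ring,
      show (2*c*1 + (1/2 - c):ℝ) = 1/2 + c by ring, smul_eq_mul]
  have hg : IntervalIntegrable (fun u => f (2*c*u + (1/2 - c))) volume 0 1 := by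
    have h1 := (hIc.comp_add_right (1/2 - c)).comp_mul_left (c := 2*c)
    have e0 : (1/2 - c - (1/2 - c)) / (2*c) = (0:ℝ) := by
      rw [sub_self, zero_div]
    have e1 : (1/2 + c - (1/2 - c)) / (2*c) = (1:ℝ) := by
      field_simp; ring
    rw [e0, e1] at h1
    exact h1
  -- pointwise concavity bound
  have key2 : ∀ u ∈ Set.Icc (0:ℝ) 1,
      2*c * f u + (1 - 2*c) * f (1/2) ≤ f (2*c*u + (1/2 - c)) := by
    intro u hu
    have h := hf_concave.2 hu hhalfmem (by positivity : (0:ℝ) ≤ 2*c)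
      (by linarith : (0:ℝ) ≤ 1 - 2*c) (by ring)
    simp only [smul_eq_mul] at h
    have : 2*c*u + (1 - 2*c) * (1/2) = 2*c*u + (1/2 - c) := by ring
    rw [this] at h
    exact h
  have hlower : (1:ℝ) ≤ ∫ u in (0:ℝ)..1, f (2*c*u + (1/2 - c)) := by
    calc (1:ℝ) ≤ 2*c*1 + (1 - 2*c) * f (1/2) := by nlinarith
      _ = ∫ u in (0:ℝ)..1, (2*c * f u + (1 - 2*c) * f (1/2)) := by
          rw [intervalIntegral.integral_add (hI01.const_mul _) intervalIntegrable_const,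
            intervalIntegral.integral_const_mul, hprob']
          simp
      _ ≤ ∫ u in (0:ℝ)..1, f (2*c*u + (1/2 - c)) :=
          intervalIntegral.integral_mono_on (by norm_num)
            ((hI01.const_mul _).add intervalIntegrable_const) hg key2
  have hfin : ∫ x in Set.Icc (1/2 - c) (1/2 + c), f x
      = ∫ x in (1/2 - c)..(1/2 + c), f x := by
    rw [intervalIntegral.integral_of_le hle, ← integral_Icc_eq_integral_Ioc]
  rw [hfin]
  have : 2*c * (1:ℝ) ≤ 2*c * ∫ u in (0:ℝ)..1, f (2*c*u + (1/2 - c)) := by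
    apply mul_le_mul_of_nonneg_left hlower (by positivity)
  rw [hsubst] at this
  calc 2*c = 2*c*1 := by ring
    _ ≤ 2*c * ((2*c)⁻¹ * ∫ x in (1/2 - c)..(1/2 + c), f x) := this
    _ = ∫ x in (1/2 - c)..(1/2 + c), f x := by field_simp
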